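/- In the swap Schelling game with individual favorite nodes and tolerance parameter τ ≥ 1/2 on a regular network, the pair Φ(p) = ((1/2)·Σ_x |N⁻(p(x))|, Σ_x d_G(fav_x, p(x))), ordered lexicographically, is an ordinal potential function: for every window size w ≥ 1, if every node of G has the same number k of nodes within distance w (|N_w(u)| = k for all u ∈ V), then for every bijective placement p and every improving swap producing the placement p', one has Φ(p') <_lex Φ(p). Consequently the SSG with τ ≥ 1/2 on regular networks is a potential game. -/

import Mathlib

open SimpleGraph Finset

namespace Schelling

variable {V I : Type*}

/-- The `w`-neighborhood of a node `u`: all nodes `v ≠ u` with `d_G(u,v) ≤ w`. -/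
def nbhd (G : SimpleGraph V) (w : ℕ) (u : V) : Set V :=
  {v | v ≠ u ∧ G.dist u v ≤ w}

/-- `|N⁺(p(x))|`: number of nodes in the `w`-neighborhood of `p x` occupied by
agents of the same type as `x`. -/
noncomputable def sCount (G : SimpleGraph V) (w : ℕ) (tp : I → Bool) (p : I → V) (x : I) : ℕ :=
  {v | v ∈ nbhd G w (p x) ∧ ∃ y, p y = v ∧ tp y = tp x}.ncard

/-- `|N⁻(p(x))|`: number of nodes in the `w`-neighborhood of `p x` occupied by
agents of the other type. -/
noncomputable def dCount (G : SimpleGraph V) (w : ℕ) (tp : I → Bool) (p : I → V) (x : I) : ℕ :=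
  {v | v ∈ nbhd G w (p x) ∧ ∃ y, p y = v ∧ tp y ≠ tp x}.ncard

/-- An agent is isolated if no node of its neighborhood is occupied. -/
def isolated (G : SimpleGraph V) (w : ℕ) (tp : I → Bool) (p : I → V) (x : I) : Prop :=
  sCount G w tp p x + dCount G w tp p x = 0

/-- The (scalar) cost of agent `x`: `τ` if isolated, otherwise
`max 0 (τ - |N⁺|/(|N⁺| + |N⁻|))`. -/
noncomputable def ucost (G : SimpleGraph V) (w : ℕ) (τ : ℝ) (tp : I → Bool) (p : I → V)
    (x : I) : ℝ :=
  if sCount G w tp p x + dCount G w tp p x = 0 then τ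
  else max 0 (τ - (sCount G w tp p x : ℝ) / ((sCount G w tp p x : ℝ) + (dCount G w tp p x : ℝ)))

/-- An agent is happy if it is not isolated and its local happiness ratio is at least `τ`. -/
def happy (G : SimpleGraph V) (w : ℕ) (τ : ℝ) (tp : I → Bool) (p : I → V) (x : I) : Prop :=
  sCount G w tp p x + dCount G w tp p x ≠ 0 ∧
    τ ≤ (sCount G w tp p x : ℝ) / ((sCount G w tp p x : ℝ) + (dCount G w tp p x : ℝ))

/-- The vector cost of agent `x`: scalar cost together with `d_G(fav_x, p x) + 1`,
to be compared lexicographically. -/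
noncomputable def vcost (G : SimpleGraph V) (w : ℕ) (τ : ℝ) (tp : I → Bool) (fav : I → V)
    (p : I → V) (x : I) : ℝ × ℕ :=
  (ucost G w τ tp p x, G.dist (fav x) (p x) + 1)

/-- The number of colored pairs `Φ(p) = (1/2) · Σ_x |N⁻(p(x))|`. -/
noncomputable def Phi [Fintype I] (G : SimpleGraph V) (w : ℕ) (tp : I → Bool) (p : I → V) : ℝ :=
  (1 / 2) * ∑ x : I, (dCount G w tp p x : ℝ)

/-- The pair potential `(Φ(p), Σ_x d_G(fav_x, p x))`, compared lexicographically. -/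
noncomputable def PhiPair [Fintype I] (G : SimpleGraph V) (w : ℕ) (tp : I → Bool) (fav : I → V)
    (p : I → V) : ℝ × ℕ :=
  (Phi G w tp p, ∑ x : I, G.dist (fav x) (p x))

/-- The placement obtained from `p` by swapping the locations of agents `x` and `y`. -/
def swapP [DecidableEq I] (p : I → V) (x y : I) : I → V := p ∘ Equiv.swap x y

/-- The agents of type `A`. -/
def typeA [Fintype I] (tp : I → Bool) : Finset I := Finset.univ.filter (fun i => tp i = true)

/-- The agents of type `B`. -/
def typeB [Fintype I] (tp : I → Bool) : Finset I := Finset.univ.filter (fun i => tp i = false)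

/-- A placement is stable for the uniform SSG if no pair of agents can both strictly
decrease their cost by swapping. -/
def uStable (G : SimpleGraph V) (w : ℕ) (τ : ℝ) (tp : I → Bool) (p : I → V)
    [DecidableEq I] : Prop :=
  ∀ x y : I, ¬ (ucost G w τ tp (swapP p x y) x < ucost G w τ tp p x ∧
                ucost G w τ tp (swapP p x y) y < ucost G w τ tp p y)

/-- A placement is stable for the SSG with favorite nodes if no pair of agents can both
strictly lexicographically decrease their cost vector by swapping. -/
def vStable (G : SimpleGraph V) (w : ℕ) (τ : ℝ) (tp : I → Bool) (fav : I → V) (p : I → V)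
    [DecidableEq I] : Prop :=
  ∀ x y : I, ¬ (toLex (vcost G w τ tp fav (swapP p x y) x) < toLex (vcost G w τ tp fav p x) ∧
                toLex (vcost G w τ tp fav (swapP p x y) y) < toLex (vcost G w τ tp fav p y))



open Classical in
/-- The weight of the (ordered) pair of nodes `(u,v)` in the jump-game potential:
`1` if both are occupied by agents of different types, `1/3` if at least one is empty,
and `0` otherwise. -/
noncomputable def edgeW (tp : I → Bool) (p : I → V) (u v : V) : ℝ :=
  if ∃ x y : I, p x = u ∧ p y = v ∧ tp x ≠ tp y then 1
  else if (∀ x : I, p x ≠ u) ∨ (∀ y : I, p y ≠ v) then 1 / 3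
  else 0

open Classical in
/-- The edge-weight potential `Φ(p) = Σ_{e ∈ E} w_e(p)`, written as half the sum over
ordered adjacent pairs (each edge is counted twice, and `edgeW` is symmetric). -/
noncomputable def jumpPhi [Fintype V] (G : SimpleGraph V) (tp : I → Bool) (p : I → V) : ℝ :=
  (1 / 2) * ∑ u : V, ∑ v : V, if G.Adj u v then edgeW tp p u v else 0

/-- A placement is stable for the uniform JSG if no agent can strictly decrease her cost
by jumping to an empty node. -/
def jStable (G : SimpleGraph V) (w : ℕ) (τ : ℝ) (tp : I → Bool) (p : I → V)
    [DecidableEq I] : Prop :=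
  ∀ (x : I) (v : V), v ∉ Set.range p →
    ¬ (ucost G w τ tp (Function.update p x v) x < ucost G w τ tp p x)

/-- The social cost of a placement: the number of unhappy agents together with the total
distance cost, compared lexicographically. -/
noncomputable def socialCost [Fintype I] (G : SimpleGraph V) (w : ℕ) (τ : ℝ) (tp : I → Bool)
    (fav : I → V) (p : I → V) : ℕ × ℕ :=
  ({x : I | ¬ happy G w τ tp p x}.ncard, ∑ x : I, (G.dist (fav x) (p x) + 1))


end Schelling

namespace SchellingAux
open Schelling

variable {V I : Type*}

lemma bool_eq_of_ne_of_ne {b1 b2 b3 : Bool} (h1 : b1 ≠ b2) (h2 : b3 ≠ b2) : b1 = b3 := by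
  revert h1 h2; cases b1 <;> cases b2 <;> cases b3 <;> decide

lemma mem_nbhd_comm (G : SimpleGraph V) (w : ℕ) {u v : V} :
    v ∈ nbhd G w u ↔ u ∈ nbhd G w v := by
  simp only [nbhd, Set.mem_setOf_eq]
  constructor
  · rintro ⟨h1, h2⟩; exact ⟨Ne.symm h1, by rwa [SimpleGraph.dist_comm]⟩
  · rintro ⟨h1, h2⟩; exact ⟨Ne.symm h1, by rwa [SimpleGraph.dist_comm]⟩

lemma ne_of_mem_nbhd {G : SimpleGraph V} {w : ℕ} {u v : V} (h : v ∈ nbhd G w u) : v ≠ u := h.1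

open Classical in
lemma ncard_cast_sum [Fintype V] (s : Set V) :
    ((s.ncard : ℝ)) = ∑ v : V, if v ∈ s then (1:ℝ) else 0 := by
  rw [Finset.sum_boole]
  norm_num
  rw [Set.ncard_eq_toFinset_card' s]
  congr 1
  ext a; simp

lemma dCount_eq_ncard (G : SimpleGraph V) (w : ℕ) (tp : I → Bool) (q : I → V)
    (hq : Function.Surjective q) (c : V → Bool) (hc : ∀ z, c (q z) = tp z) (z : I) :
    dCount G w tp q z = {v | v ∈ nbhd G w (q z) ∧ c v ≠ c (q z)}.ncard := by
  unfold dCount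
  congr 1
  ext v
  simp only [Set.mem_setOf_eq, hc z]
  refine and_congr_right fun _ => ?_
  constructor
  · rintro ⟨i, rfl, hi⟩; rw [hc i]; exact hi
  · intro h; obtain ⟨i, rfl⟩ := hq v; exact ⟨i, rfl, by rw [← hc i]; exact h⟩

lemma sCount_eq_ncard (G : SimpleGraph V) (w : ℕ) (tp : I → Bool) (q : I → V)
    (hq : Function.Surjective q) (c : V → Bool) (hc : ∀ z, c (q z) = tp z) (z : I) :
    sCount G w tp q z = {v | v ∈ nbhd G w (q z) ∧ c v = c (q z)}.ncard := by
  unfold sCount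
  congr 1
  ext v
  simp only [Set.mem_setOf_eq, hc z]
  refine and_congr_right fun _ => ?_
  constructor
  · rintro ⟨i, rfl, hi⟩; rw [hc i]; exact hi
  · intro h; obtain ⟨i, rfl⟩ := hq v; exact ⟨i, rfl, by rw [← hc i]; exact h⟩

lemma sd_eq_k [Fintype V] (G : SimpleGraph V) (w : ℕ) (c : V → Bool) (u : V) :
    {v | v ∈ nbhd G w u ∧ c v = c u}.ncard + {v | v ∈ nbhd G w u ∧ c v ≠ c u}.ncard
      = (nbhd G w u).ncard := by
  rw [← Set.ncard_union_eq ?_ (Set.toFinite _) (Set.toFinite _)]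
  · congr 1; ext v
    by_cases h : c v = c u <;> simp [h]
  · rw [Set.disjoint_left]; rintro v ⟨_, h⟩ ⟨_, h'⟩; exact h' h

lemma swap_scount [Fintype V] (G : SimpleGraph V) (w : ℕ) (c c' : V → Bool) (a b : V)
    (hne : c a ≠ c b) (hc'a : c' a = c b) (hc'b : c' b = c a)
    (hc' : ∀ v, v ≠ a → v ≠ b → c' v = c v)
    (ε : ℕ) (hε : (a ∈ nbhd G w b ∧ ε = 1) ∨ (a ∉ nbhd G w b ∧ ε = 0)) :
    {v | v ∈ nbhd G w b ∧ c' v = c' b}.ncard + ε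
      = {v | v ∈ nbhd G w b ∧ c v ≠ c b}.ncard := by
  have hset : {v | v ∈ nbhd G w b ∧ c' v = c' b}
      = {v | v ∈ nbhd G w b ∧ c v ≠ c b} \ {a} := by
    ext v
    simp only [Set.mem_setOf_eq, Set.mem_diff, Set.mem_singleton_iff]
    constructor
    · rintro ⟨hv, hcv⟩
      have hvb : v ≠ b := ne_of_mem_nbhd hv
      have hva : v ≠ a := by rintro rfl; rw [hc'a, hc'b] at hcv; exact hne hcv.symm
      rw [hc' v hva hvb, hc'b] at hcv
      exact ⟨⟨hv, by rw [hcv]; exact hne⟩, hva⟩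
    · rintro ⟨⟨hv, hcv⟩, hva⟩
      have hvb : v ≠ b := ne_of_mem_nbhd hv
      rw [hc'b, hc' v hva hvb]
      exact ⟨hv, bool_eq_of_ne_of_ne hcv hne⟩
  rw [hset]
  rcases hε with ⟨ha, rfl⟩ | ⟨ha, rfl⟩
  · exact Set.ncard_diff_singleton_add_one ⟨ha, hne⟩ (Set.toFinite _)
  · rw [Set.diff_singleton_eq_self (fun h => ha h.1), add_zero]

lemma sum_pairs_swap [Fintype V] (h : V → V → ℝ) (a b : V) (hab : a ≠ b)
    (hsymm : ∀ u v, h u v = h v u)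
    (hzero : ∀ u v, u ≠ a → u ≠ b → v ≠ a → v ≠ b → h u v = 0)
    (hcorner : ∀ u v, (u = a ∨ u = b) → (v = a ∨ v = b) → h u v = 0) :
    ∑ u : V, ∑ v : V, h u v = 2 * (∑ v : V, h a v + ∑ v : V, h b v) := by
  classical
  have hrow : ∀ u, u ≠ a → u ≠ b → ∑ v : V, h u v = h a u + h b u := by
    intro u hua hub
    have h1 : ∑ v : V, h u v = ∑ v ∈ ({a, b} : Finset V), h u v := by
      symm
      apply Finset.sum_subset (Finset.subset_univ _)
      intro v _ hv
      simp only [Finset.mem_insert, Finset.mem_singleton] at hv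
      push_neg at hv
      exact hzero u v hua hub hv.1 hv.2
    rw [h1, Finset.sum_pair hab, hsymm u a, hsymm u b]
  have split : ∑ u : V, ∑ v : V, h u v
      = ∑ u ∈ Finset.univ \ {a, b}, (∑ v : V, h u v) + (∑ v : V, h a v + ∑ v : V, h b v) := by
    rw [← Finset.sum_pair hab (f := fun u => ∑ v : V, h u v)]
    rw [Finset.sum_sdiff (Finset.subset_univ _)]
  rw [split]
  have step2 : ∑ u ∈ Finset.univ \ {a, b}, (∑ v : V, h u v)
      = ∑ u ∈ Finset.univ \ {a, b}, (h a u + h b u) := by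
    apply Finset.sum_congr rfl
    intro u hu
    simp only [Finset.mem_sdiff, Finset.mem_insert, Finset.mem_singleton] at hu
    push_neg at hu
    exact hrow u hu.2.1 hu.2.2
  have step3 : ∑ u ∈ Finset.univ \ {a, b}, (h a u + h b u)
      = ∑ u : V, (h a u + h b u) := by
    apply Finset.sum_subset (Finset.sdiff_subset)
    intro u _ hu
    simp only [Finset.mem_sdiff, Finset.mem_univ, true_and, not_not] at hu
    simp only [Finset.mem_insert, Finset.mem_singleton] at hu
    rw [hcorner a u (Or.inl rfl) hu, hcorner b u (Or.inr rfl) hu, add_zero]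
  rw [step2, step3, Finset.sum_add_distrib]
  ring

open Classical in
lemma row_sum [Fintype V] (G : SimpleGraph V) (w : ℕ) (cc : V → Bool) (u : V) :
    ∑ v : V, (if v ∈ nbhd G w u ∧ cc v ≠ cc u then (1:ℝ) else 0)
      = ({v | v ∈ nbhd G w u ∧ cc v ≠ cc u}.ncard : ℝ) := by
  rw [ncard_cast_sum]
  exact Finset.sum_congr rfl fun v _ => by congr 1

open Classical in
lemma sum_dCount_eq [Fintype V] [Fintype I] (G : SimpleGraph V) (w : ℕ) (tp : I → Bool)
    (q : I → V) (hq : Function.Bijective q) (c : V → Bool) (hc : ∀ z, c (q z) = tp z) :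
    ∑ z : I, (dCount G w tp q z : ℝ)
      = ∑ u : V, ∑ v : V, (if v ∈ nbhd G w u ∧ c v ≠ c u then (1:ℝ) else 0) := by
  have key : ∀ z : I, (dCount G w tp q z : ℝ)
      = ∑ v : V, (if v ∈ nbhd G w (q z) ∧ c v ≠ c (q z) then (1:ℝ) else 0) := by
    intro z
    rw [dCount_eq_ncard G w tp q hq.surjective c hc z, ncard_cast_sum]
    apply Finset.sum_congr rfl
    intro v _
    congr 1
  calc ∑ z : I, (dCount G w tp q z : ℝ)
      = ∑ z : I, ∑ v : V, (if v ∈ nbhd G w (q z) ∧ c v ≠ c (q z) then (1:ℝ) else 0) :=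
        Finset.sum_congr rfl (fun z _ => key z)
    _ = _ := Fintype.sum_bijective q hq _ _ (fun z => rfl)

lemma ucost_div_eq {τ : ℝ} {s d k : ℕ} (h : s + d = k) :
    max 0 (τ - (s:ℝ) / ((s:ℝ) + (d:ℝ))) = max 0 (τ - (s:ℝ) / (k:ℝ)) := by
  congr 2
  rw [← h]; push_cast; ring

lemma Umono {τ : ℝ} {k : ℕ} (hk : (0:ℝ) < k) {s t : ℕ} (hst : s ≤ t) :
    max 0 (τ - (t:ℝ)/k) ≤ max 0 (τ - (s:ℝ)/k) := by
  apply max_le_max le_rfl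
  have h : (s:ℝ) ≤ t := by exact_mod_cast hst
  have : (s:ℝ)/k ≤ (t:ℝ)/k := by gcongr
  linarith

lemma Ukey {τ : ℝ} {k : ℕ} (hk : (0:ℝ) < k) {s s' : ℕ}
    (heq : max 0 (τ - (s':ℝ)/k) = max 0 (τ - (s:ℝ)/k)) (hlt : s' < s) :
    τ * k ≤ s' := by
  have h1 : (s':ℝ) < s := by exact_mod_cast hlt
  have hdd : (s':ℝ)/k < (s:ℝ)/k := by gcongr
  by_cases hpos : 0 < τ - (s:ℝ)/k
  · exfalso
    have e1 : max 0 (τ - (s:ℝ)/k) = τ - (s:ℝ)/k := max_eq_right hpos.le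
    have e3 : τ - (s':ℝ)/k ≤ max 0 (τ - (s':ℝ)/k) := le_max_right _ _
    rw [heq, e1] at e3
    linarith
  · push_neg at hpos
    have e1 : max 0 (τ - (s:ℝ)/k) = 0 := max_eq_left (by linarith)
    rw [e1] at heq
    have e2 : τ - (s':ℝ)/k ≤ 0 := by
      by_contra hh
      push_neg at hh
      have := le_max_right (0:ℝ) (τ - (s':ℝ)/k)
      rw [heq] at this
      linarith
    have : τ ≤ (s':ℝ)/k := by linarith
    calc τ * k ≤ ((s':ℝ)/k) * k := by nlinarith
      _ = s' := by field_simp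

end SchellingAux

open Schelling SchellingAux

/-- In the swap Schelling game with individual favorite nodes and `τ ≥ 1/2`
on a regular network, the pair `Φ(p) = ((1/2)·Σ_x |N⁻(p(x))|, Σ_x d_G(fav_x, p(x)))`,
ordered lexicographically, is an ordinal potential function: every improving swap strictly
lexicographically decreases it.  Consequently the SSG with `τ ≥ 1/2` on regular networks is
a potential game. -/
theorem SSG_regular_PhiPair_is_potential {V I : Type*} [Fintype V] [Fintype I] [DecidableEq I]
    (G : SimpleGraph V) (hG : G.Connected)
    (w : ℕ) (hw : 1 ≤ w)
    (k : ℕ) (hreg : ∀ u : V, (nbhd G w u).ncard = k)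
    (τ : ℝ) (hτ : 1 / 2 ≤ τ) (hτ1 : τ ≤ 1)
    (tp : I → Bool) (hA : 2 ≤ (typeA tp).card) (hB : 2 ≤ (typeB tp).card)
    (fav : I → V)
    (p : I → V) (hp : Function.Bijective p)
    (x y : I)
    (hx : toLex (vcost G w τ tp fav (swapP p x y) x) < toLex (vcost G w τ tp fav p x))
    (hy : toLex (vcost G w τ tp fav (swapP p x y) y) < toLex (vcost G w τ tp fav p y)) :
    toLex (PhiPair G w tp fav (swapP p x y)) < toLex (PhiPair G w tp fav p) := by
  classical
  -- x ≠ y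
  have hxy : x ≠ y := by
    rintro rfl
    rw [swapP, Equiv.swap_self] at hx
    simp only [Equiv.coe_refl, Function.comp_id] at hx
    exact lt_irrefl _ hx
  have hq : Function.Bijective (swapP p x y) := hp.comp (Equiv.swap x y).bijective
  have hab : p x ≠ p y := fun h => hxy (hp.injective h)
  have hswx : swapP p x y x = p y := by
    simp [swapP, Equiv.swap_apply_left]
  have hswy : swapP p x y y = p x := by
    simp [swapP, Equiv.swap_apply_right]
  have hswz : ∀ z, z ≠ x → z ≠ y → swapP p x y z = p z := fun z h1 h2 => by
    simp [swapP, Equiv.swap_apply_of_ne_of_ne h1 h2]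
  -- colorings
  set e := Equiv.ofBijective p hp with he_def
  have hep : ∀ z, e z = p z := fun z => rfl
  set c : V → Bool := fun v => tp (e.symm v) with hc_def
  set c' : V → Bool := fun v => tp (Equiv.swap x y (e.symm v)) with hc'_def
  have hc : ∀ z, c (p z) = tp z := fun z => by
    show tp (e.symm (p z)) = tp z
    rw [← hep z, Equiv.symm_apply_apply]
  have hc' : ∀ z, c' (swapP p x y z) = tp z := fun z => by
    show tp (Equiv.swap x y (e.symm (swapP p x y z))) = tp z
    have h1 : swapP p x y z = e (Equiv.swap x y z) := rfl
    rw [h1, Equiv.symm_apply_apply, Equiv.swap_apply_self]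
  have hca : c (p x) = tp x := hc x
  have hcb : c (p y) = tp y := hc y
  have hc'a : c' (p x) = tp y := by have := hc' y; rwa [hswy] at this
  have hc'b : c' (p y) = tp x := by have := hc' x; rwa [hswx] at this
  have hc'v : ∀ v, v ≠ p x → v ≠ p y → c' v = c v := by
    intro v h1 h2
    show tp (Equiv.swap x y (e.symm v)) = tp (e.symm v)
    rw [Equiv.swap_apply_of_ne_of_ne]
    · intro h; exact h1 (by rw [← hep x, ← h, Equiv.apply_symm_apply])
    · intro h; exact h2 (by rw [← hep y, ← h, Equiv.apply_symm_apply])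
  -- k ≥ 1
  have hcardI : 2 ≤ Fintype.card I := by
    have h1 := Finset.card_le_univ (typeA tp)
    omega
  have hcardV : 2 ≤ Fintype.card V :=
    le_trans hcardI (Fintype.card_le_of_injective p hp.injective)
  have hk1 : 1 ≤ k := by
    obtain ⟨v0, hv0⟩ := Fintype.exists_ne_of_one_lt_card (by omega) (p x)
    obtain ⟨u0, hu0⟩ : ∃ z, G.Adj (p x) z := by
      obtain ⟨pw⟩ := hG.preconnected (p x) v0
      cases pw with
      | nil => exact absurd rfl hv0
      | cons h q => exact ⟨_, h⟩
    have hmem : u0 ∈ nbhd G w (p x) :=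
      ⟨hu0.ne', le_trans (le_of_eq (SimpleGraph.dist_eq_one_iff_adj.mpr hu0)) hw⟩
    have hpos : 0 < (nbhd G w (p x)).ncard :=
      (Set.ncard_pos (Set.toFinite _)).mpr ⟨u0, hmem⟩
    rw [hreg] at hpos
    omega
  have hk0 : (0:ℝ) < k := by exact_mod_cast hk1
  -- count identities
  have Hsx := sCount_eq_ncard G w tp p hp.surjective c hc x
  have Hdx := dCount_eq_ncard G w tp p hp.surjective c hc x
  have Hsy := sCount_eq_ncard G w tp p hp.surjective c hc y
  have Hdy := dCount_eq_ncard G w tp p hp.surjective c hc y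
  have Hsx' := sCount_eq_ncard G w tp _ hq.surjective c' hc' x
  have Hdx' := dCount_eq_ncard G w tp _ hq.surjective c' hc' x
  have Hsy' := sCount_eq_ncard G w tp _ hq.surjective c' hc' y
  have Hdy' := dCount_eq_ncard G w tp _ hq.surjective c' hc' y
  rw [hswx] at Hsx' Hdx'
  rw [hswy] at Hsy' Hdy'
  -- sums equal k
  have F1x : sCount G w tp p x + dCount G w tp p x = k := by
    rw [Hsx, Hdx, sd_eq_k, hreg]
  have F1y : sCount G w tp p y + dCount G w tp p y = k := by
    rw [Hsy, Hdy, sd_eq_k, hreg]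
  have F1x' : sCount G w tp (swapP p x y) x + dCount G w tp (swapP p x y) x = k := by
    rw [Hsx', Hdx', sd_eq_k, hreg]
  have F1y' : sCount G w tp (swapP p x y) y + dCount G w tp (swapP p x y) y = k := by
    rw [Hsy', Hdy', sd_eq_k, hreg]
  -- rewrite ucosts
  have hucost : ∀ (q' : I → V) (z : I), sCount G w tp q' z + dCount G w tp q' z = k →
      ucost G w τ tp q' z = max 0 (τ - (sCount G w tp q' z : ℝ) / (k:ℝ)) := by
    intro q' z hsd
    rw [ucost, if_neg (by omega), ucost_div_eq hsd]
  simp only [vcost, Prod.Lex.lt_iff, ofLex_toLex] at hx hy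
  rw [hswx] at hx
  rw [hswy] at hy
  rw [hucost p x F1x, hucost _ x F1x'] at hx
  rw [hucost p y F1y, hucost _ y F1y'] at hy
  -- Phi difference formula
  have hPhiDiff : ∑ z : I, (dCount G w tp (swapP p x y) z : ℝ)
      - ∑ z : I, (dCount G w tp p z : ℝ)
      = 2 * (((dCount G w tp (swapP p x y) y : ℝ) - (dCount G w tp p x : ℝ))
        + ((dCount G w tp (swapP p x y) x : ℝ) - (dCount G w tp p y : ℝ))) := by
    rw [sum_dCount_eq G w tp _ hq c' hc', sum_dCount_eq G w tp p hp c hc]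
    rw [← Finset.sum_sub_distrib]
    simp_rw [← Finset.sum_sub_distrib]
    rw [sum_pairs_swap
      (fun u v => (if v ∈ nbhd G w u ∧ c' v ≠ c' u then (1:ℝ) else 0)
        - (if v ∈ nbhd G w u ∧ c v ≠ c u then (1:ℝ) else 0)) (p x) (p y) hab ?_ ?_ ?_]
    · rw [Finset.sum_sub_distrib, Finset.sum_sub_distrib, row_sum, row_sum, row_sum, row_sum,
        ← Hdy', ← Hdx, ← Hdx', ← Hdy]
    · -- symmetry
      intro u v
      have hiff : ∀ (cc : V → Bool), ((v ∈ nbhd G w u ∧ cc v ≠ cc u)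
          ↔ (u ∈ nbhd G w v ∧ cc u ≠ cc v)) := fun cc =>
        and_congr (mem_nbhd_comm G w) ne_comm
      rw [if_congr (hiff c') rfl rfl, if_congr (hiff c) rfl rfl]
    · -- zero off the swap nodes
      intro u v hu1 hu2 hv1 hv2
      rw [hc'v u hu1 hu2, hc'v v hv1 hv2, sub_self]
    · -- corners
      intro u v hu hv
      have hcc' : (v ∈ nbhd G w u ∧ c' v ≠ c' u) ↔ (v ∈ nbhd G w u ∧ c v ≠ c u) := by
        rcases hu with rfl | rfl <;> rcases hv with rfl | rfl
        · constructor <;> (rintro ⟨h1, _⟩; exact absurd rfl (ne_of_mem_nbhd h1))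
        · rw [hc'a, hc'b, hca, hcb]
          exact and_congr_right fun _ => ne_comm
        · rw [hc'a, hc'b, hca, hcb]
          exact and_congr_right fun _ => ne_comm
        · constructor <;> (rintro ⟨h1, _⟩; exact absurd rfl (ne_of_mem_nbhd h1))
      rw [if_congr hcc' rfl rfl, sub_self]
  -- distance sum helper
  have distSum : G.dist (fav x) (p y) < G.dist (fav x) (p x) →
      G.dist (fav y) (p x) < G.dist (fav y) (p y) →
      ∑ z : I, G.dist (fav z) (swapP p x y z) < ∑ z : I, G.dist (fav z) (p z) := by
    intro ddx ddy
    have hS0 : ∑ z ∈ Finset.univ \ {x, y}, G.dist (fav z) (swapP p x y z)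
        = ∑ z ∈ Finset.univ \ {x, y}, G.dist (fav z) (p z) := by
      apply Finset.sum_congr rfl
      intro z hz
      simp only [Finset.mem_sdiff, Finset.mem_insert, Finset.mem_singleton] at hz
      push_neg at hz
      rw [hswz z hz.2.1 hz.2.2]
    rw [← Finset.sum_sdiff (Finset.subset_univ ({x, y} : Finset I))
        (f := fun z => G.dist (fav z) (swapP p x y z)),
      ← Finset.sum_sdiff (Finset.subset_univ ({x, y} : Finset I))
        (f := fun z => G.dist (fav z) (p z)),
      Finset.sum_pair hxy, Finset.sum_pair hxy, hS0, hswx, hswy]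
    omega
  by_cases htp : tp x = tp y
  · -- same-type swap
    have hcc : c' = c := funext fun v => by
      by_cases h1 : v = p x
      · rw [h1, hc'a, hca, htp]
      · by_cases h2 : v = p y
        · rw [h2, hc'b, hcb, htp]
        · exact hc'v v h1 h2
    have hsxp : sCount G w tp (swapP p x y) x = sCount G w tp p y := by
      rw [Hsx', Hsy, hcc]
    have hsyp : sCount G w tp (swapP p x y) y = sCount G w tp p x := by
      rw [Hsy', Hsx, hcc]
    have hdxp : dCount G w tp (swapP p x y) x = dCount G w tp p y := by
      rw [Hdx', Hdy, hcc]
    have hdyp : dCount G w tp (swapP p x y) y = dCount G w tp p x := by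
      rw [Hdy', Hdx, hcc]
    rw [hsxp] at hx
    rw [hsyp] at hy
    -- resolve lex
    have hresolve : G.dist (fav x) (p y) < G.dist (fav x) (p x) ∧
        G.dist (fav y) (p x) < G.dist (fav y) (p y) := by
      rcases hx with h | h
      · rcases hy with h' | h'
        · exact absurd (h.trans h') (lt_irrefl _)
        · rw [h'.1] at h; exact absurd h (lt_irrefl _)
      · rcases hy with h' | h'
        · rw [h.1] at h'; exact absurd h' (lt_irrefl _)
        · exact ⟨by omega, by omega⟩
    have hPhiEq : Phi G w tp (swapP p x y) = Phi G w tp p := by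
      rw [Phi, Phi]
      have e1 : (dCount G w tp (swapP p x y) y : ℝ) = (dCount G w tp p x : ℝ) := by
        rw [hdyp]
      have e2 : (dCount G w tp (swapP p x y) x : ℝ) = (dCount G w tp p y : ℝ) := by
        rw [hdxp]
      rw [e1, e2] at hPhiDiff
      have : ∑ z : I, (dCount G w tp (swapP p x y) z : ℝ)
          = ∑ z : I, (dCount G w tp p z : ℝ) := by linarith [hPhiDiff]
      rw [this]
    rw [PhiPair, PhiPair, Prod.Lex.lt_iff]
    right
    exact ⟨hPhiEq, distSum hresolve.1 hresolve.2⟩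
  · -- different-type swap
    obtain ⟨E, hE⟩ : ∃ E : ℕ, (p x ∈ nbhd G w (p y) ∧ E = 1) ∨ (p x ∉ nbhd G w (p y) ∧ E = 0) := by
      by_cases hmem : p x ∈ nbhd G w (p y)
      · exact ⟨1, Or.inl ⟨hmem, rfl⟩⟩
      · exact ⟨0, Or.inr ⟨hmem, rfl⟩⟩
    have hE' : (p y ∈ nbhd G w (p x) ∧ E = 1) ∨ (p y ∉ nbhd G w (p x) ∧ E = 0) := by
      rcases hE with ⟨h1, h2⟩ | ⟨h1, h2⟩
      · exact Or.inl ⟨(mem_nbhd_comm G w).mp h1, h2⟩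
      · exact Or.inr ⟨fun h => h1 ((mem_nbhd_comm G w).mp h), h2⟩
    have hcacb : c (p x) ≠ c (p y) := by rw [hca, hcb]; exact htp
    have key1 : sCount G w tp (swapP p x y) x + E = dCount G w tp p y := by
      rw [Hsx', Hdy]
      exact swap_scount G w c c' (p x) (p y) hcacb (by rw [hc'a, hcb]) (by rw [hc'b, hca])
        hc'v E hE
    have key2 : sCount G w tp (swapP p x y) y + E = dCount G w tp p x := by
      rw [Hsy', Hdx]
      exact swap_scount G w c c' (p y) (p x) (Ne.symm hcacb) (by rw [hc'b, hca])
        (by rw [hc'a, hcb]) (fun v h1 h2 => hc'v v h2 h1) E hE'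
    -- sx ≤ sx'
    have hle : sCount G w tp p x ≤ sCount G w tp (swapP p x y) x := by
      by_contra hcon
      push_neg at hcon
      have hyl : sCount G w tp (swapP p x y) y < sCount G w tp p y := by omega
      have hx1 : max 0 (τ - (sCount G w tp (swapP p x y) x : ℝ)/k)
          = max 0 (τ - (sCount G w tp p x : ℝ)/k) := by
        rcases hx with h | h
        · exact absurd h (not_lt.mpr (Umono hk0 hcon.le))
        · exact h.1
      have hy1 : max 0 (τ - (sCount G w tp (swapP p x y) y : ℝ)/k)
          = max 0 (τ - (sCount G w tp p y : ℝ)/k) := by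
        rcases hy with h | h
        · exact absurd h (not_lt.mpr (Umono hk0 hyl.le))
        · exact h.1
      have k1 := Ukey hk0 hx1 hcon
      have k2 := Ukey hk0 hy1 hyl
      have hreal : (k:ℝ) ≤ (sCount G w tp (swapP p x y) x : ℝ)
          + (sCount G w tp (swapP p x y) y : ℝ) := by
        nlinarith [mul_nonneg (by linarith : (0:ℝ) ≤ τ - 1/2) hk0.le]
      have hnk : k ≤ sCount G w tp (swapP p x y) x + sCount G w tp (swapP p x y) y := by
        exact_mod_cast hreal
      omega
    by_cases hst : sCount G w tp p x = sCount G w tp (swapP p x y) x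
    · -- equal: distances must drop, Phi unchanged
      have hsy2 : sCount G w tp p y = sCount G w tp (swapP p x y) y := by omega
      have hdx2 : dCount G w tp p x = dCount G w tp (swapP p x y) x := by omega
      have hdy2 : dCount G w tp p y = dCount G w tp (swapP p x y) y := by omega
      have hresolve : G.dist (fav x) (p y) < G.dist (fav x) (p x) ∧
          G.dist (fav y) (p x) < G.dist (fav y) (p y) := by
        constructor
        · rcases hx with h | h
          · rw [hst] at h; exact absurd h (lt_irrefl _)
          · omega
        · rcases hy with h | h
          · rw [hsy2] at h; exact absurd h (lt_irrefl _)
          · omega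
      have hPhiEq : Phi G w tp (swapP p x y) = Phi G w tp p := by
        rw [Phi, Phi]
        have e1 : (dCount G w tp (swapP p x y) y : ℝ) = (dCount G w tp p y : ℝ) := by
          rw [hdy2]
        have e2 : (dCount G w tp (swapP p x y) x : ℝ) = (dCount G w tp p x : ℝ) := by
          rw [hdx2]
        rw [e1, e2] at hPhiDiff
        -- careful: hPhiDiff RHS is (d_y' - d_x) + (d_x' - d_y), not zero yet
        have : ∑ z : I, (dCount G w tp (swapP p x y) z : ℝ)
            = ∑ z : I, (dCount G w tp p z : ℝ) := by
          have hx2 : dCount G w tp p x + dCount G w tp p y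
              = dCount G w tp p y + dCount G w tp p x := by omega
          have hc2 : (dCount G w tp p y : ℝ) + (dCount G w tp p x : ℝ)
              = (dCount G w tp p x : ℝ) + (dCount G w tp p y : ℝ) := by ring
          linarith [hPhiDiff]
        rw [this]
      rw [PhiPair, PhiPair, Prod.Lex.lt_iff]
      right
      exact ⟨hPhiEq, distSum hresolve.1 hresolve.2⟩
    · -- strict: Phi drops
      have hlt : sCount G w tp p x < sCount G w tp (swapP p x y) x :=
        lt_of_le_of_ne hle hst
      have hdrop : dCount G w tp (swapP p x y) x + dCount G w tp (swapP p x y) y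
          < dCount G w tp p x + dCount G w tp p y := by omega
      have hPhiLt : Phi G w tp (swapP p x y) < Phi G w tp p := by
        rw [Phi, Phi]
        have hc2 : (dCount G w tp (swapP p x y) x : ℝ) + (dCount G w tp (swapP p x y) y : ℝ)
            < (dCount G w tp p x : ℝ) + (dCount G w tp p y : ℝ) := by exact_mod_cast hdrop
        have : ∑ z : I, (dCount G w tp (swapP p x y) z : ℝ)
            < ∑ z : I, (dCount G w tp p z : ℝ) := by linarith [hPhiDiff]
        linarith
      rw [PhiPair, PhiPair, Prod.Lex.lt_iff]
      left
      exact hPhiLt
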